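/- Let w_t = (log t)^r t^γ for t ≥ 1 (and 0 for t ≤ 0), with r ≥ 0 and ξ > -1/2. Then for every δ > 0, Σ_{j=0}^{t-1} Δ_j(-ξ)(log(t-j))^r (t-j)^γ = O(t^{max(γ,-1) - ξ + δ}) as t → ∞. -/

import Mathlib

/-- Coefficient of `s^j` in the power series expansion of `(1-s)^(-d)`. -/
noncomputable def deltaCoef (d : ℝ) : ℕ → ℝ
  | 0 => 1
  | j + 1 => deltaCoef d j * ((j : ℝ) + d) / ((j : ℝ) + 1)

open Real Finset

lemma half_rpow (p x t : ℝ) (ht : 0 < t) (h1 : t/2 ≤ x) (h2 : x ≤ t) :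
    x ^ p ≤ 2 ^ |p| * t ^ p := by
  have hx : 0 < x := lt_of_lt_of_le (by linarith) h1
  have h2p : (1:ℝ) ≤ 2 ^ |p| := Real.one_le_rpow (by norm_num) (abs_nonneg p)
  rcases le_or_gt 0 p with hp | hp
  · have : x ^ p ≤ t ^ p := Real.rpow_le_rpow hx.le h2 hp
    nlinarith [Real.rpow_nonneg ht.le p]
  · have h3 : x ^ p ≤ (t/2) ^ p :=
      Real.rpow_le_rpow_of_nonpos (by linarith) h1 hp.le
    have h4 : (t/2 : ℝ) ^ p = t ^ p / 2 ^ p := Real.div_rpow ht.le (by norm_num) p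
    have h5 : (2:ℝ) ^ |p| = ((2:ℝ) ^ p)⁻¹ := by
      rw [abs_of_neg hp, Real.rpow_neg (by norm_num)]
    have h6 : (0:ℝ) < 2 ^ p := Real.rpow_pos_of_pos (by norm_num) p
    calc x ^ p ≤ t ^ p / 2 ^ p := h3.trans_eq h4
      _ = 2 ^ |p| * t ^ p := by rw [h5]; field_simp

/-- x ≤ c ≤ 2x implies c^p ≤ 2^|p| x^p -/
lemma near_rpow (p x c : ℝ) (hx : 0 < x) (h1 : x ≤ c) (h2 : c ≤ 2*x) :
    c ^ p ≤ 2 ^ |p| * x ^ p := by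
  have := half_rpow p c (2*x) (by linarith) (by linarith) h2
  rcases le_or_gt 0 p with hp | hp
  · have h3 : c ^ p ≤ (2*x) ^ p := Real.rpow_le_rpow (by linarith) h2 hp
    have h4 : (2*x:ℝ) ^ p = 2 ^ p * x ^ p := Real.mul_rpow (by norm_num) hx.le
    rw [abs_of_nonneg hp]
    exact h3.trans_eq h4
  · have h3 : c ^ p ≤ x ^ p := Real.rpow_le_rpow_of_nonpos hx h1 hp.le
    have h2p : (1:ℝ) ≤ 2 ^ |p| := Real.one_le_rpow (by norm_num) (abs_nonneg p)
    nlinarith [Real.rpow_nonneg hx.le p]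

/-- harmonic sums -/
noncomputable def Hsum (n : ℕ) : ℝ := ∑ j ∈ Finset.range n, (1:ℝ)/((j:ℝ)+1)

lemma Hsum_lb (n : ℕ) : Real.log ((n:ℝ)+1) ≤ Hsum n := by
  induction n with
  | zero => simp [Hsum]
  | succ k ih =>
    have hk : (0:ℝ) < (k:ℝ)+1 := by positivity
    have h1 : Real.log ((k:ℝ)+1+1) - Real.log ((k:ℝ)+1) ≤ 1/((k:ℝ)+1) := by
      rw [← Real.log_div (by positivity) (by positivity)]
      have := Real.log_le_sub_one_of_pos (x := ((k:ℝ)+1+1)/((k:ℝ)+1)) (by positivity)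
      have h2 : ((k:ℝ)+1+1)/((k:ℝ)+1) - 1 = 1/((k:ℝ)+1) := by field_simp; ring
      linarith
    have h3 : Hsum (k+1) = Hsum k + 1/((k:ℝ)+1) := by
      simp [Hsum, Finset.sum_range_succ]
    push_cast
    push_cast at ih h1
    linarith
  
lemma Hsum_ub (n : ℕ) : Hsum (n+1) ≤ 1 + Real.log ((n:ℝ)+1) := by
  induction n with
  | zero => simp [Hsum]
  | succ k ih =>
    have hk : (0:ℝ) < (k:ℝ)+1 := by positivity
    have h1 : (1:ℝ)/((k:ℝ)+1+1) ≤ Real.log ((k:ℝ)+1+1) - Real.log ((k:ℝ)+1) := by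
      rw [← Real.log_div (by positivity) (by positivity)]
      have := Real.log_le_sub_one_of_pos (x := ((k:ℝ)+1)/((k:ℝ)+1+1)) (by positivity)
      have h2 : Real.log (((k:ℝ)+1)/((k:ℝ)+1+1)) = - Real.log (((k:ℝ)+1+1)/((k:ℝ)+1)) := by
        rw [← Real.log_inv]; congr 1; field_simp
      have h3 : ((k:ℝ)+1)/((k:ℝ)+1+1) - 1 = -(1/((k:ℝ)+1+1)) := by field_simp; ring
      rw [h2] at this
      linarith
    have h3 : Hsum (k+1+1) = Hsum (k+1) + 1/((k:ℝ)+1+1) := by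
      rw [Hsum, Finset.sum_range_succ, ← Hsum]; push_cast; ring
    push_cast
    push_cast at ih h1 h3
    linarith

lemma Hsum_ub' (n : ℕ) : Hsum n ≤ 1 + Real.log ((n:ℝ)+1) := by
  cases n with
  | zero =>
    simp only [Hsum, Finset.range_zero, Finset.sum_empty, Nat.cast_zero, zero_add, Real.log_one]
    norm_num
  | succ k =>
    refine (Hsum_ub k).trans ?_
    have : Real.log ((k:ℝ)+1) ≤ Real.log ((k:ℝ)+1+1) :=
      Real.log_le_log (by positivity) (by linarith)
    push_cast
    linarith

lemma deltaCoef_succ (d : ℝ) (j : ℕ) :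
    deltaCoef d (j+1) = deltaCoef d j * ((j : ℝ) + d) / ((j : ℝ) + 1) := rfl

lemma deltaBound (d : ℝ) : ∃ C, 0 ≤ C ∧ ∀ j : ℕ, |deltaCoef d j| ≤ C * ((j:ℝ)+1) ^ (d-1) := by
  obtain ⟨N, hN⟩ := exists_nat_ge (-d)
  have hstep : ∀ j : ℕ, N ≤ j →
      |deltaCoef d (j+1)| ≤ |deltaCoef d j| * Real.exp ((d-1)/((j:ℝ)+1)) := by
    intro j hj
    have hj1 : (0:ℝ) < (j:ℝ)+1 := by positivity
    have hjd : (0:ℝ) ≤ (j:ℝ)+d := by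
      have : (N:ℝ) ≤ (j:ℝ) := by exact_mod_cast hj
      linarith
    have hratio : ((j:ℝ)+d)/((j:ℝ)+1) ≤ Real.exp ((d-1)/((j:ℝ)+1)) := by
      have heq : ((j:ℝ)+d)/((j:ℝ)+1) = (d-1)/((j:ℝ)+1) + 1 := by field_simp; ring
      rw [heq]
      exact Real.add_one_le_exp _
    have habs : |deltaCoef d (j+1)| = |deltaCoef d j| * (((j:ℝ)+d)/((j:ℝ)+1)) := by
      rw [deltaCoef_succ, mul_div_assoc, abs_mul, abs_div, abs_of_nonneg hjd, abs_of_pos hj1]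
      all_goals ring
    rw [habs]
    exact mul_le_mul_of_nonneg_left hratio (abs_nonneg _)
  have hind : ∀ j : ℕ, N ≤ j →
      |deltaCoef d j| ≤ |deltaCoef d N| * Real.exp ((d-1)*(Hsum j - Hsum N)) := by
    intro j hj
    induction j, hj using Nat.le_induction with
    | base => simp
    | succ j hj ih =>
      calc |deltaCoef d (j+1)| ≤ |deltaCoef d j| * Real.exp ((d-1)/((j:ℝ)+1)) := hstep j hj
        _ ≤ (|deltaCoef d N| * Real.exp ((d-1)*(Hsum j - Hsum N))) * Real.exp ((d-1)/((j:ℝ)+1)) :=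
            mul_le_mul_of_nonneg_right ih (Real.exp_nonneg _)
        _ = |deltaCoef d N| * Real.exp ((d-1)*(Hsum (j+1) - Hsum N)) := by
            rw [mul_assoc, ← Real.exp_add]
            congr 2
            have : Hsum (j+1) = Hsum j + 1/((j:ℝ)+1) := by
              rw [Hsum, Finset.sum_range_succ, ← Hsum]
            rw [this]; ring
  have hexp : ∀ j : ℕ, Real.exp ((d-1)*Hsum j) ≤ Real.exp |d-1| * ((j:ℝ)+1)^(d-1) := by
    intro j
    have hj1 : (0:ℝ) < (j:ℝ)+1 := by positivity
    have hrw : ((j:ℝ)+1)^(d-1) = Real.exp (Real.log ((j:ℝ)+1) * (d-1)) :=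
      Real.rpow_def_of_pos hj1 _
    rcases le_or_gt 1 d with hd | hd
    · have h1 : (d-1)*Hsum j ≤ (d-1)*(1 + Real.log ((j:ℝ)+1)) :=
        mul_le_mul_of_nonneg_left (Hsum_ub' j) (by linarith)
      calc Real.exp ((d-1)*Hsum j) ≤ Real.exp ((d-1)*(1 + Real.log ((j:ℝ)+1))) :=
            Real.exp_le_exp.mpr h1
        _ = Real.exp (d-1) * Real.exp (Real.log ((j:ℝ)+1) * (d-1)) := by
            rw [← Real.exp_add]; congr 1; ring
        _ ≤ Real.exp |d-1| * ((j:ℝ)+1)^(d-1) := by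
            rw [hrw]
            exact mul_le_mul_of_nonneg_right (Real.exp_le_exp.mpr (le_abs_self _))
              (Real.exp_nonneg _)
    · have h1 : (d-1)*Hsum j ≤ (d-1)*Real.log ((j:ℝ)+1) := by
        have := Hsum_lb j
        nlinarith
      calc Real.exp ((d-1)*Hsum j) ≤ Real.exp (Real.log ((j:ℝ)+1) * (d-1)) := by
            rw [mul_comm (Real.log _)]; exact Real.exp_le_exp.mpr h1
        _ = ((j:ℝ)+1)^(d-1) := hrw.symm
        _ ≤ Real.exp |d-1| * ((j:ℝ)+1)^(d-1) := by
            have h2 : (1:ℝ) ≤ Real.exp |d-1| := Real.one_le_exp (abs_nonneg _)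
            nlinarith [Real.rpow_nonneg hj1.le (d-1)]
  set C2 := ∑ i ∈ Finset.range N, |deltaCoef d i| * ((i:ℝ)+1)^(1-d) with hC2
  have hC2n : 0 ≤ C2 := Finset.sum_nonneg fun i _ => by positivity
  set A := |deltaCoef d N| * Real.exp ((1-d)*Hsum N) * Real.exp |d-1| with hA
  have hAn : 0 ≤ A := by positivity
  refine ⟨C2 + A, by linarith, fun j => ?_⟩
  have hj1 : (0:ℝ) < ((j:ℝ)+1)^(d-1) := Real.rpow_pos_of_pos (by positivity) _
  rcases le_or_gt N j with h | h
  · have h1 := hind j h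
    have h2 : Real.exp ((d-1)*(Hsum j - Hsum N))
        = Real.exp ((d-1)*Hsum j) * Real.exp ((1-d)*Hsum N) := by
      rw [← Real.exp_add]; congr 1; ring
    have h3 : |deltaCoef d j| ≤ |deltaCoef d N| * (Real.exp |d-1| * ((j:ℝ)+1)^(d-1))
        * Real.exp ((1-d)*Hsum N) := by
      rw [h2] at h1
      have h5 := hexp j
      have h4 : |deltaCoef d N| * (Real.exp ((d-1)*Hsum j) * Real.exp ((1-d)*Hsum N))
          ≤ |deltaCoef d N| * ((Real.exp |d-1| * ((j:ℝ)+1)^(d-1)) * Real.exp ((1-d)*Hsum N)) :=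
        mul_le_mul_of_nonneg_left
          (mul_le_mul_of_nonneg_right h5 (Real.exp_nonneg _)) (abs_nonneg _)
      exact h1.trans (h4.trans_eq (by ring))
    calc |deltaCoef d j| ≤ |deltaCoef d N| * (Real.exp |d-1| * ((j:ℝ)+1)^(d-1))
        * Real.exp ((1-d)*Hsum N) := h3
      _ = A * ((j:ℝ)+1)^(d-1) := by rw [hA]; ring
      _ ≤ (C2 + A) * ((j:ℝ)+1)^(d-1) := by nlinarith
  · have hmem : j ∈ Finset.range N := Finset.mem_range.mpr h
    have h1 : |deltaCoef d j| * ((j:ℝ)+1)^(1-d) ≤ C2 :=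
      Finset.single_le_sum (f := fun i => |deltaCoef d i| * ((i:ℝ)+1)^(1-d))
        (fun i _ => by positivity) hmem
    have h2 : ((j:ℝ)+1)^(1-d) * ((j:ℝ)+1)^(d-1) = 1 := by
      rw [← Real.rpow_add (by positivity)]
      norm_num
    have h3 : |deltaCoef d j| = (|deltaCoef d j| * ((j:ℝ)+1)^(1-d)) * ((j:ℝ)+1)^(d-1) := by
      rw [mul_assoc, h2, mul_one]
    rw [h3]
    nlinarith

lemma log_le_rpow_aux (x ε : ℝ) (hx : 1 ≤ x) (hε : 0 < ε) :
    Real.log x ≤ x ^ ε / ε := by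
  have hx0 : (0:ℝ) < x := by linarith
  have h1 : Real.log (x ^ ε) ≤ x ^ ε - 1 :=
    Real.log_le_sub_one_of_pos (Real.rpow_pos_of_pos hx0 ε)
  rw [Real.log_rpow hx0] at h1
  have h2 : ε * Real.log x ≤ x ^ ε := by linarith
  rw [div_eq_inv_mul, ← mul_le_mul_iff_right₀ hε, ← mul_assoc, mul_inv_cancel₀ hε.ne', one_mul]
  exact h2

lemma sumBound (a ε : ℝ) (hε : 0 < ε) : ∃ C, 0 < C ∧ ∀ n : ℕ, 1 ≤ n →
    ∑ j ∈ Finset.range n, ((j:ℝ)+1) ^ a ≤ C * (n:ℝ) ^ (max (a+1) 0 + ε) := by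
  refine ⟨2 + 1/ε, by positivity, fun n hn => ?_⟩
  have hn0 : (0:ℝ) < n := by exact_mod_cast hn
  have hn1 : (1:ℝ) ≤ n := by exact_mod_cast hn
  have hterm : ∀ j ∈ Finset.range n, ((j:ℝ)+1) ^ a
      ≤ (n:ℝ) ^ (max (a+1) 0) * (1/((j:ℝ)+1)) := by
    intro j hj
    have hjn : (j:ℝ)+1 ≤ n := by
      have := Finset.mem_range.mp hj
      have : (j:ℝ) + 1 ≤ n := by exact_mod_cast this
      linarith
    have hj0 : (0:ℝ) < (j:ℝ)+1 := by positivity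
    have hsplit : ((j:ℝ)+1) ^ a = ((j:ℝ)+1) ^ (a+1) * (1/((j:ℝ)+1)) := by
      rw [Real.rpow_add hj0, Real.rpow_one]
      field_simp
    rw [hsplit]
    apply mul_le_mul_of_nonneg_right _ (by positivity)
    rcases le_or_gt 0 (a+1) with h | h
    · calc ((j:ℝ)+1) ^ (a+1) ≤ (n:ℝ) ^ (a+1) := Real.rpow_le_rpow hj0.le hjn h
        _ ≤ (n:ℝ) ^ (max (a+1) 0) := Real.rpow_le_rpow_of_exponent_le hn1 (le_max_left _ _)
    · have hb : (1:ℝ) ≤ (j:ℝ)+1 := by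
        have : (0:ℝ) ≤ (j:ℝ) := Nat.cast_nonneg j
        linarith
      calc ((j:ℝ)+1) ^ (a+1) ≤ 1 := Real.rpow_le_one_of_one_le_of_nonpos hb h.le
        _ ≤ (n:ℝ) ^ (max (a+1) 0) := Real.one_le_rpow hn1 (le_max_of_le_right le_rfl)
  have h1 : ∑ j ∈ Finset.range n, ((j:ℝ)+1) ^ a
      ≤ (n:ℝ) ^ (max (a+1) 0) * Hsum n := by
    rw [Hsum, Finset.mul_sum]
    exact Finset.sum_le_sum hterm
  have h2 : Hsum n ≤ (2 + 1/ε) * (n:ℝ)^ε := by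
    have h3 := Hsum_ub' n
    have h4 : Real.log ((n:ℝ)+1) ≤ Real.log ((n:ℝ)+(n:ℝ)) :=
      Real.log_le_log (by positivity) (by linarith)
    have h5 : Real.log ((n:ℝ)+(n:ℝ)) = Real.log 2 + Real.log n := by
      rw [← Real.log_mul (by norm_num) hn0.ne']; ring_nf
    have h6 : Real.log (n:ℝ) ≤ (n:ℝ)^ε / ε := log_le_rpow_aux _ _ hn1 hε
    have h7 : (1:ℝ) ≤ (n:ℝ)^ε := Real.one_le_rpow hn1 hε.le
    have h8 : Real.log 2 ≤ 1 := by
      have := Real.log_le_sub_one_of_pos (x := (2:ℝ)) (by norm_num)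
      linarith
    have h9 : (n:ℝ)^ε / ε = (1/ε) * (n:ℝ)^ε := by ring
    nlinarith
  calc ∑ j ∈ Finset.range n, ((j:ℝ)+1) ^ a ≤ (n:ℝ) ^ (max (a+1) 0) * Hsum n := h1
    _ ≤ (n:ℝ) ^ (max (a+1) 0) * ((2 + 1/ε) * (n:ℝ)^ε) := by
        apply mul_le_mul_of_nonneg_left h2 (Real.rpow_nonneg hn0.le _)
    _ = (2 + 1/ε) * ((n:ℝ) ^ (max (a+1) 0) * (n:ℝ)^ε) := by ring
    _ = (2 + 1/ε) * (n:ℝ) ^ (max (a+1) 0 + ε) := by rw [← Real.rpow_add hn0]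

lemma logpow_le (A ε : ℝ) (hε : 0 < ε) : ∃ M, 0 < M ∧ ∀ a x : ℝ, |a| ≤ A → 2 ≤ x →
    Real.log x ^ a ≤ M * x ^ ε := by
  set A' := max A 1 with hA'
  have hA1 : (1:ℝ) ≤ A' := le_max_right _ _
  have hA0 : (0:ℝ) < A' := by linarith
  set ε' := ε / A' with hε'
  have hε'0 : 0 < ε' := by positivity
  refine ⟨(1/ε' + 2) ^ A', Real.rpow_pos_of_pos (by positivity) _, fun a x ha hx => ?_⟩
  have hx0 : (0:ℝ) < x := by linarith
  have hx1 : (1:ℝ) ≤ x := by linarith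
  have hl2 : (0:ℝ) < Real.log 2 := Real.log_pos (by norm_num)
  have hlx2 : Real.log 2 ≤ Real.log x := Real.log_le_log (by norm_num) hx
  have hl0 : (0:ℝ) < Real.log x := lt_of_lt_of_le hl2 hlx2
  have haA : |a| ≤ A' := ha.trans (le_max_left _ _)
  -- step 1 : log x ^ a ≤ (log x + 2) ^ A'
  have hs1 : Real.log x ^ a ≤ (Real.log x + 2) ^ A' := by
    set y := Real.log x with hy
    rcases le_or_gt 1 y with h | h
    · calc y ^ a ≤ y ^ |a| := Real.rpow_le_rpow_of_exponent_le h (le_abs_self a)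
        _ ≤ (y+2) ^ |a| := Real.rpow_le_rpow (by linarith) (by linarith) (abs_nonneg a)
        _ ≤ (y+2) ^ A' := Real.rpow_le_rpow_of_exponent_le (by linarith) haA
    · have h1 : y ^ a ≤ y ^ (-|a|) :=
        Real.rpow_le_rpow_of_exponent_ge hl0 h.le (neg_abs_le a)
      have hl2' : (1:ℝ)/2 ≤ y := by
        have := Real.log_two_gt_d9
        linarith
      have h2 : y ^ (-|a|) = (y ^ |a|)⁻¹ := Real.rpow_neg hl0.le _
      have h3 : ((1:ℝ)/2) ^ |a| ≤ y ^ |a| := Real.rpow_le_rpow (by norm_num) hl2' (abs_nonneg a)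
      have h4 : ((1:ℝ)/2) ^ |a| = ((2:ℝ) ^ |a|)⁻¹ := by
        rw [one_div, Real.inv_rpow (by norm_num)]
      have h5 : (y ^ |a|)⁻¹ ≤ (2:ℝ) ^ |a| := by
        rw [← inv_inv ((2:ℝ) ^ |a|), ← h4]
        exact inv_anti₀ (by rw [h4]; positivity) h3
      have h6 : (2:ℝ) ^ |a| ≤ (2:ℝ) ^ A' := Real.rpow_le_rpow_of_exponent_le (by norm_num) haA
      have h7 : (2:ℝ) ^ A' ≤ (y+2) ^ A' := Real.rpow_le_rpow (by norm_num) (by linarith) hA0.le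
      calc y ^ a ≤ (y ^ |a|)⁻¹ := h1.trans_eq h2
        _ ≤ (2:ℝ) ^ |a| := h5
        _ ≤ (y+2) ^ A' := h6.trans h7
  -- step 2 : log x + 2 ≤ (1/ε' + 2) * x ^ ε'
  have hs2 : Real.log x + 2 ≤ (1/ε' + 2) * x ^ ε' := by
    have h1 : Real.log x ≤ x ^ ε' / ε' := log_le_rpow_aux x ε' hx1 hε'0
    have h2 : (1:ℝ) ≤ x ^ ε' := Real.one_le_rpow hx1 hε'0.le
    have h3 : x ^ ε' / ε' = (1/ε') * x ^ ε' := by ring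
    nlinarith
  -- combine
  have hs3 : (Real.log x + 2) ^ A' ≤ ((1/ε' + 2) * x ^ ε') ^ A' :=
    Real.rpow_le_rpow (by linarith) hs2 hA0.le
  have hs4 : ((1/ε' + 2) * x ^ ε') ^ A' = (1/ε' + 2) ^ A' * x ^ ε := by
    rw [Real.mul_rpow (by positivity) (Real.rpow_nonneg hx0.le _)]
    congr 1
    rw [← Real.rpow_mul hx0.le]
    congr 1
    rw [hε']
    exact div_mul_cancel₀ _ hA0.ne'
  exact hs1.trans (hs3.trans_eq hs4)

/-- continuous forward difference -/
def Dc (f : ℝ → ℝ) : ℝ → ℝ := fun x => f (x+1) - f x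

/-- derivative-bound chain -/
def Hd : ℕ → (ℝ → ℝ) → ℝ → ℝ → Prop
  | 0, f, γ, C => ∀ x : ℝ, 2 ≤ x → |f x| ≤ C * x ^ γ
  | (i+1), f, γ, C => ∃ f' : ℝ → ℝ, (∀ x : ℝ, 2 ≤ x → HasDerivAt f (f' x) x) ∧ Hd i f' (γ-1) C

lemma Hd_add : ∀ (i : ℕ) (f g : ℝ → ℝ) (γ C D : ℝ), Hd i f γ C → Hd i g γ D →
    Hd i (fun x => f x + g x) γ (C + D) := by
  intro i
  induction i with
  | zero =>
    intro f g γ C D hf hg x hx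
    calc |f x + g x| ≤ |f x| + |g x| := abs_add_le _ _
      _ ≤ C * x ^ γ + D * x ^ γ := add_le_add (hf x hx) (hg x hx)
      _ = (C + D) * x ^ γ := by ring
  | succ i ih =>
    intro f g γ C D hf hg
    obtain ⟨f', hf', hfr⟩ := hf
    obtain ⟨g', hg', hgr⟩ := hg
    exact ⟨fun x => f' x + g' x, fun x hx => (hf' x hx).add (hg' x hx), ih _ _ _ _ _ hfr hgr⟩

lemma Hd_delta : ∀ (i : ℕ) (f : ℝ → ℝ) (γ C : ℝ), 0 ≤ C → Hd (i+1) f γ C →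
    Hd i (Dc f) (γ-1) (C * 2 ^ |γ-1-(i:ℝ)|) := by
  intro i
  induction i with
  | zero =>
    intro f γ C hC hf
    obtain ⟨f', hder, hbound⟩ := hf
    intro x hx
    have hx1 : x < x + 1 := by linarith
    have hcont : ContinuousOn f (Set.Icc x (x+1)) := fun y hy =>
      ((hder y (by rcases hy with ⟨h1, _⟩; linarith)).continuousAt).continuousWithinAt
    obtain ⟨c, hc, hceq⟩ := exists_hasDerivAt_eq_slope f f' hx1 hcont
      (fun y hy => hder y (by rcases hy with ⟨h1, _⟩; linarith))
    have hc1 : x ≤ c := (Set.mem_Ioo.mp hc).1.le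
    have hc2 : c ≤ 2*x := by
      have := (Set.mem_Ioo.mp hc).2
      linarith
    have heq : Dc f x = f' c := by
      rw [Dc, hceq]
      field_simp
      ring
    rw [heq]
    have h1 : |f' c| ≤ C * c ^ (γ-1) := hbound c (by linarith)
    have h2 : c ^ (γ-1) ≤ 2 ^ |γ-1| * x ^ (γ-1) := near_rpow _ _ _ (by linarith) hc1 hc2
    have h3 : |f' c| ≤ C * (2 ^ |γ-1| * x ^ (γ-1)) :=
      h1.trans (mul_le_mul_of_nonneg_left h2 hC)
    have h4 : |γ-1-((0:ℕ):ℝ)| = |γ-1| := by norm_num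
    rw [h4]
    linarith [h3]
  | succ i ih =>
    intro f γ C hC hf
    obtain ⟨f', hder, hbound⟩ := hf
    refine ⟨Dc f', fun x hx => ?_, ?_⟩
    · have h1 : HasDerivAt (fun y => f (y+1)) (f' (x+1) * 1) x :=
        (hder (x+1) (by linarith)).comp x ((hasDerivAt_id x).add_const 1)
      have h2 : HasDerivAt (fun y => f (y+1) - f y) (f' (x+1) * 1 - f' x) x :=
        h1.sub (hder x hx)
      have h3 : f' (x+1) * 1 - f' x = Dc f' x := by rw [Dc]; ring
      rw [← h3]
      exact h2
    · have h3 := ih f' (γ-1) C hC hbound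
      have h4 : C * 2 ^ |γ-1-((i+1:ℕ):ℝ)| = C * 2 ^ |(γ-1)-1-(i:ℝ)| := by
        push_cast
        congr 2
        ring_nf
      rw [h4]
      exact h3

lemma HdBound : ∀ (i : ℕ) (γ : ℝ), ∃ K, 0 < K ∧ ∀ (f : ℝ → ℝ) (C : ℝ), 0 ≤ C →
    Hd i f γ C → ∀ x : ℝ, 2 ≤ x → |Dc^[i] f x| ≤ K * C * x ^ (γ - i) := by
  intro i
  induction i with
  | zero =>
    intro γ
    refine ⟨1, one_pos, fun f C hC hf x hx => ?_⟩
    have h := hf x hx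
    simpa using h
  | succ i ih =>
    intro γ
    obtain ⟨K, hK, hKb⟩ := ih (γ-1)
    refine ⟨K * 2 ^ |γ-1-(i:ℝ)|, by positivity, fun f C hC hf x hx => ?_⟩
    have h1 : Hd i (Dc f) (γ-1) (C * 2 ^ |γ-1-(i:ℝ)|) := Hd_delta i f γ C hC hf
    have h2 := hKb (Dc f) (C * 2 ^ |γ-1-(i:ℝ)|) (by positivity) h1 x hx
    have h3 : Dc^[i+1] f = Dc^[i] (Dc f) := Function.iterate_succ_apply Dc i f
    rw [h3]
    have h5 : x ^ (γ - 1 - (i:ℝ)) = x ^ (γ - ((i+1:ℕ):ℝ)) := by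
      congr 1; push_cast; ring
    calc |Dc^[i] (Dc f) x| ≤ K * (C * 2 ^ |γ-1-(i:ℝ)|) * x ^ (γ - 1 - (i:ℝ)) := h2
      _ = K * 2 ^ |γ-1-(i:ℝ)| * C * x ^ (γ - ((i+1:ℕ):ℝ)) := by rw [h5]; ring

lemma famHd (ε : ℝ) (hε : 0 < ε) : ∀ (i n : ℕ) (c a : ℕ → ℝ) (b A : ℝ),
    (∀ l, l < n → |a l| ≤ A) → ∃ C, 0 ≤ C ∧
    Hd i (fun x => ∑ l ∈ Finset.range n, c l * Real.log x ^ a l * x ^ b) (b + ε) C := by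
  intro i
  induction i with
  | zero =>
    intro n c a b A hA
    obtain ⟨M, hM, hMb⟩ := logpow_le A ε hε
    refine ⟨(∑ l ∈ Finset.range n, |c l|) * M, by positivity, fun x hx => ?_⟩
    have hx0 : (0:ℝ) < x := by linarith
    have hl0 : (0:ℝ) < Real.log x :=
      lt_of_lt_of_le (Real.log_pos (by norm_num)) (Real.log_le_log (by norm_num) hx)
    have hterm : ∀ l ∈ Finset.range n, |c l * Real.log x ^ a l * x ^ b|
        ≤ |c l| * (M * x ^ (b + ε)) := by
      intro l hl
      have h1 : |c l * Real.log x ^ a l * x ^ b|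
          = |c l| * Real.log x ^ a l * x ^ b := by
        rw [abs_mul, abs_mul, abs_of_nonneg (Real.rpow_nonneg hl0.le _),
          abs_of_nonneg (Real.rpow_nonneg hx0.le _)]
      rw [h1]
      have h2 : Real.log x ^ a l ≤ M * x ^ ε :=
        hMb (a l) x (hA l (Finset.mem_range.mp hl)) hx
      have h3 : |c l| * Real.log x ^ a l * x ^ b ≤ |c l| * (M * x ^ ε) * x ^ b := by
        have := mul_le_mul_of_nonneg_left h2 (abs_nonneg (c l))
        exact mul_le_mul_of_nonneg_right this (Real.rpow_nonneg hx0.le _)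
      have h4 : |c l| * (M * x ^ ε) * x ^ b = |c l| * (M * x ^ (b + ε)) := by
        rw [Real.rpow_add hx0]
        ring
      linarith
    calc |∑ l ∈ Finset.range n, c l * Real.log x ^ a l * x ^ b|
        ≤ ∑ l ∈ Finset.range n, |c l * Real.log x ^ a l * x ^ b| :=
          Finset.abs_sum_le_sum_abs _ _
      _ ≤ ∑ l ∈ Finset.range n, |c l| * (M * x ^ (b + ε)) := Finset.sum_le_sum hterm
      _ = (∑ l ∈ Finset.range n, |c l|) * M * x ^ (b + ε) := by
          rw [← Finset.sum_mul]
          ring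
  | succ i ih =>
    intro n c a b A hA
    obtain ⟨C1, hC1, hH1⟩ := ih n (fun l => c l * a l) (fun l => a l - 1) (b-1) (A+1)
      (fun l hl => by
        have h1 := hA l hl
        have h0 : |a l - 1| ≤ |a l| + |1| := abs_sub (a l) 1
        rw [abs_one] at h0
        linarith)
    obtain ⟨C2, hC2, hH2⟩ := ih n (fun l => c l * b) a (b-1) (A+1)
      (fun l hl => (hA l hl).trans (by linarith))
    refine ⟨C1 + C2, by linarith, ?_⟩
    refine ⟨fun x => (∑ l ∈ Finset.range n, (c l * a l) * Real.log x ^ (a l - 1) * x ^ (b-1))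
      + (∑ l ∈ Finset.range n, (c l * b) * Real.log x ^ (a l) * x ^ (b-1)), ?_, ?_⟩
    · intro x hx
      have hx0 : (0:ℝ) < x := by linarith
      have hl0 : (0:ℝ) < Real.log x :=
        lt_of_lt_of_le (Real.log_pos (by norm_num)) (Real.log_le_log (by norm_num) hx)
      have hder : ∀ l ∈ Finset.range n, HasDerivAt
          (fun y => c l * Real.log y ^ a l * y ^ b)
          ((c l * (a l * Real.log x ^ (a l - 1) * x⁻¹)) * x ^ b
            + (c l * Real.log x ^ a l) * (b * x ^ (b-1))) x := by
        intro l _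
        have hL : HasDerivAt (fun y => Real.log y ^ a l)
            (a l * Real.log x ^ (a l - 1) * x⁻¹) x := by
          have h1 := Real.hasDerivAt_rpow_const (x := Real.log x) (p := a l) (Or.inl hl0.ne')
          have h2 := Real.hasDerivAt_log hx0.ne'
          exact h1.comp x h2
        have hP : HasDerivAt (fun y => y ^ b) (b * x ^ (b-1)) x :=
          Real.hasDerivAt_rpow_const (Or.inl hx0.ne')
        exact (hL.const_mul (c l)).mul hP
      have hsum := HasDerivAt.fun_sum hder
      have heqd : (∑ l ∈ Finset.range n, ((c l * (a l * Real.log x ^ (a l - 1) * x⁻¹)) * x ^ b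
            + (c l * Real.log x ^ a l) * (b * x ^ (b-1))))
          = (∑ l ∈ Finset.range n, (c l * a l) * Real.log x ^ (a l - 1) * x ^ (b-1))
            + (∑ l ∈ Finset.range n, (c l * b) * Real.log x ^ (a l) * x ^ (b-1)) := by
        rw [← Finset.sum_add_distrib]
        apply Finset.sum_congr rfl
        intro l _
        have hxb : x ^ (b-1) = x ^ b * x⁻¹ := by
          rw [Real.rpow_sub hx0, Real.rpow_one, div_eq_mul_inv]
        rw [hxb]
        ring
      rw [heqd] at hsum
      exact hsum
    · have h5 : b + ε - 1 = (b - 1) + ε := by ring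
      rw [h5]
      exact Hd_add i _ _ _ _ _ hH1 hH2

/-- discrete forward difference -/
def Dop (v : ℕ → ℝ) : ℕ → ℝ := fun k => v (k+1) - v k

lemma Dop_Dc : ∀ (i : ℕ) (g : ℝ → ℝ) (k : ℕ),
    Dop^[i] (fun n : ℕ => g n) k = Dc^[i] g k := by
  intro i
  induction i with
  | zero => intro g k; simp
  | succ i ih =>
    intro g k
    have h1 : Dop^[i+1] (fun n : ℕ => g n) k = Dop^[i] (Dop (fun n : ℕ => g n)) k := by
      rw [Function.iterate_succ_apply]
    have h2 : Dop (fun n : ℕ => g n) = (fun n : ℕ => Dc g n) := by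
      funext m
      simp only [Dop, Dc]
      push_cast
      ring_nf
    rw [h1, h2, ih (Dc g) k, ← Function.iterate_succ_apply]

lemma Dop_crude : ∀ (i : ℕ) (v : ℕ → ℝ) (k : ℕ),
    |Dop^[i] v k| ≤ 2^i * ∑ l ∈ Finset.range (i+1), |v (k+l)| := by
  intro i
  induction i with
  | zero => intro v k; simp
  | succ i ih =>
    intro v k
    have h1 : Dop^[i+1] v k = Dop^[i] (Dop v) k := by rw [Function.iterate_succ_apply]
    rw [h1]
    refine (ih (Dop v) k).trans ?_
    have h2 : ∀ l ∈ Finset.range (i+1), |Dop v (k+l)| ≤ |v (k+l+1)| + |v (k+l)| := by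
      intro l _
      exact abs_sub _ _
    have h3 : ∑ l ∈ Finset.range (i+1), |Dop v (k+l)|
        ≤ ∑ l ∈ Finset.range (i+1), (|v (k+l+1)| + |v (k+l)|) := Finset.sum_le_sum h2
    have h4 : ∑ l ∈ Finset.range (i+1), |v (k+l+1)| ≤ ∑ l ∈ Finset.range (i+2), |v (k+l)| := by
      rw [Finset.sum_range_succ' (fun l => |v (k+l)|) (i+1)]
      have h7 : ∑ l ∈ Finset.range (i+1), (fun l => |v (k+l)|) (l+1)
          = ∑ l ∈ Finset.range (i+1), |v (k+l+1)| := rfl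
      rw [h7]
      linarith [abs_nonneg (v (k+0))]
    have h5 : ∑ l ∈ Finset.range (i+1), |v (k+l)| ≤ ∑ l ∈ Finset.range (i+2), |v (k+l)| := by
      apply Finset.sum_le_sum_of_subset_of_nonneg
      · exact Finset.range_subset_range.mpr (by omega)
      · intro l _ _; exact abs_nonneg _
    rw [Finset.sum_add_distrib] at h3
    have h6 : (0:ℝ) ≤ 2^i := by positivity
    calc (2:ℝ)^i * ∑ l ∈ Finset.range (i+1), |Dop v (k+l)|
        ≤ 2^i * (∑ l ∈ Finset.range (i+2), |v (k+l)| + ∑ l ∈ Finset.range (i+2), |v (k+l)|) := by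
          apply mul_le_mul_of_nonneg_left _ h6
          linarith
      _ = 2^(i+1) * ∑ l ∈ Finset.range (i+2), |v (k+l)| := by ring

lemma wBound1 (γ r ε : ℝ) (hε : 0 < ε) (i : ℕ) : ∃ C, 0 ≤ C ∧ ∀ k : ℕ, 1 ≤ k →
    |Dop^[i] (fun k : ℕ => Real.log k ^ r * (k:ℝ) ^ γ) k| ≤ C * (k:ℝ) ^ (γ - i + ε) := by
  obtain ⟨C0, hC0, hHd⟩ := famHd ε hε i 1 (fun _ => (1:ℝ)) (fun _ => r) γ |r|
    (fun l _ => le_refl |r|)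
  have hfun : (fun x : ℝ => ∑ l ∈ Finset.range 1,
      (fun _ : ℕ => (1:ℝ)) l * Real.log x ^ (fun _ : ℕ => r) l * x ^ γ)
      = fun x : ℝ => Real.log x ^ r * x ^ γ := by
    funext x
    rw [Finset.sum_range_one]
    simp
  rw [hfun] at hHd
  obtain ⟨K, hK, hKb⟩ := HdBound i (γ+ε)
  set F : ℝ → ℝ := fun x => Real.log x ^ r * x ^ γ with hF
  set B := 2^i * ∑ l ∈ Finset.range (i+1), |F ((1+l : ℕ) : ℝ)| with hB
  have hBn : 0 ≤ B := by
    rw [hB]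
    positivity
  refine ⟨max (K*C0) B, le_max_of_le_right hBn, fun k hk => ?_⟩
  rcases eq_or_lt_of_le hk with h1 | h2
  · -- k = 1
    have hk1 : k = 1 := h1.symm
    subst hk1
    have h3 := Dop_crude i (fun k : ℕ => F k) 1
    have h4 : ((1:ℕ):ℝ) ^ (γ - i + ε) = 1 := by
      rw [Nat.cast_one, Real.one_rpow]
    rw [h4, mul_one]
    refine h3.trans ?_
    refine le_trans ?_ (le_max_right _ _)
    exact le_of_eq (by rw [hB])
  · -- k ≥ 2
    have hk2 : 2 ≤ k := h2
    have hc2 : (2:ℝ) ≤ (k:ℝ) := by exact_mod_cast hk2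
    have h5 := hKb F C0 hC0 hHd (k:ℝ) hc2
    rw [← Dop_Dc i F k] at h5
    have h6 : ((k:ℝ)) ^ (γ + ε - i) = (k:ℝ) ^ (γ - i + ε) := by
      congr 1
      ring
    rw [h6] at h5
    refine h5.trans ?_
    exact mul_le_mul_of_nonneg_right (le_max_left _ _) (Real.rpow_nonneg (by positivity) _)

lemma wBound (γ r ε : ℝ) (hε : 0 < ε) (m : ℕ) : ∃ C, 0 ≤ C ∧ ∀ i, i ≤ m → ∀ k : ℕ, 1 ≤ k →
    |Dop^[i] (fun k : ℕ => Real.log k ^ r * (k:ℝ) ^ γ) k| ≤ C * (k:ℝ) ^ (γ - i + ε) := by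
  induction m with
  | zero =>
    obtain ⟨C, hC, hb⟩ := wBound1 γ r ε hε 0
    exact ⟨C, hC, fun i hi k hk => by rw [Nat.le_zero.mp hi]; exact hb k hk⟩
  | succ m ih =>
    obtain ⟨C, hC, hb⟩ := ih
    obtain ⟨C', hC', hb'⟩ := wBound1 γ r ε hε (m+1)
    refine ⟨max C C', le_max_of_le_left hC, fun i hi k hk => ?_⟩
    have hkpos : (0:ℝ) ≤ (k:ℝ) := Nat.cast_nonneg k
    rcases Nat.lt_or_ge i (m+1) with h | h
    · exact (hb i (by omega) k hk).trans
        (mul_le_mul_of_nonneg_right (le_max_left _ _) (Real.rpow_nonneg hkpos _))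
    · have : i = m+1 := by omega
      subst this
      exact (hb' k hk).trans
        (mul_le_mul_of_nonneg_right (le_max_right _ _) (Real.rpow_nonneg hkpos _))

lemma deltaAux (d : ℝ) : ∀ j : ℕ, ((j:ℝ)+1) * deltaCoef d (j+1) = d * deltaCoef (d+1) j := by
  intro j
  induction j with
  | zero => simp [deltaCoef]
  | succ j ih =>
    have hj1 : ((j:ℝ)+1) ≠ 0 := by positivity
    have hj2 : ((j:ℝ)+2) ≠ 0 := by positivity
    have e1 : deltaCoef d (j+2) = deltaCoef d (j+1) * (((j:ℝ)+1)+d)/(((j:ℝ)+1)+1) := by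
      rw [deltaCoef_succ d (j+1)]
      push_cast
      ring_nf
    have e2 : deltaCoef (d+1) (j+1) = deltaCoef (d+1) j * ((j:ℝ)+(d+1))/((j:ℝ)+1) := by
      rw [deltaCoef_succ (d+1) j]
    push_cast
    rw [e1, e2]
    field_simp
    linear_combination ((j:ℝ)+1+d) * ih

lemma deltaRec (d : ℝ) (j : ℕ) :
    deltaCoef d (j+1) = deltaCoef (d+1) (j+1) - deltaCoef (d+1) j := by
  have hj1 : ((j:ℝ)+1) ≠ 0 := by positivity
  have aux := deltaAux d j
  rw [deltaCoef_succ (d+1) j]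
  have : deltaCoef d (j+1) = d * deltaCoef (d+1) j / ((j:ℝ)+1) := by
    field_simp at aux ⊢
    linarith [aux]
  rw [this]
  field_simp
  ring

lemma abelsum (d : ℝ) (v : ℕ → ℝ) : ∀ (J t : ℕ), J < t →
    ∑ j ∈ Finset.range (J+1), deltaCoef d j * v (t-j)
    = ∑ j ∈ Finset.range J, deltaCoef (d+1) j * (Dop v) ((t-1)-j)
      + deltaCoef (d+1) J * v (t-J) := by
  intro J
  induction J with
  | zero => intro t ht; simp [deltaCoef]
  | succ J ih =>
    intro t ht
    rw [Finset.sum_range_succ, ih t (by omega), Finset.sum_range_succ]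
    have h1 : deltaCoef d (J+1) = deltaCoef (d+1) (J+1) - deltaCoef (d+1) J := deltaRec d J
    have h2 : Dop v ((t-1)-J) = v (t-J) - v (t-(J+1)) := by
      have e1 : (t-1)-J + 1 = t - J := by omega
      have e2 : (t-1)-J = t-(J+1) := by omega
      simp only [Dop]
      rw [e1, e2]
    rw [h1, h2]
    ring

lemma Pmain (ε : ℝ) (hε : 0 < ε) : ∀ (m : ℕ) (ξ γ : ℝ), ξ ≤ (m:ℝ) →
    ∀ (v : ℕ → ℝ) (Cv : ℝ), 0 ≤ Cv →
    (∀ i : ℕ, i ≤ m → ∀ k : ℕ, 1 ≤ k → |Dop^[i] v k| ≤ Cv * (k:ℝ) ^ (γ - i + ε)) →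
    ∃ C, 0 ≤ C ∧ ∀ t J : ℕ, 1 ≤ t → 2*J ≤ t →
      |∑ j ∈ Finset.range (J+1), deltaCoef (-ξ) j * v (t-j)|
        ≤ C * (t:ℝ) ^ (γ + ((m:ℝ)+2)*ε) * ((J:ℝ)+1) ^ (-ξ) := by
  intro m
  induction m with
  | zero =>
    intro ξ γ hξ v Cv hCv H
    rw [Nat.cast_zero] at hξ
    obtain ⟨Cd, hCd, hCdb⟩ := deltaBound (-ξ)
    obtain ⟨Cs, hCs, hCsb⟩ := sumBound (-ξ-1) ε hε
    refine ⟨Cd * Cs * (Cv * 2^|γ+ε|), by positivity, fun t J ht hJ => ?_⟩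
    have ht0 : (0:ℝ) < t := by exact_mod_cast ht
    have ht1 : (1:ℝ) ≤ t := by exact_mod_cast ht
    set Q := Cv * 2^|γ+ε| * (t:ℝ)^(γ+ε) with hQ
    have hQ0 : 0 ≤ Q := by rw [hQ]; positivity
    have hterm : ∀ j ∈ Finset.range (J+1), |deltaCoef (-ξ) j * v (t-j)|
        ≤ ((j:ℝ)+1)^(-ξ-1) * (Cd * Q) := by
      intro j hj
      have hjJ : j ≤ J := by
        have := Finset.mem_range.mp hj
        omega
      have h1 : 1 ≤ t - j := by omega
      have hjt : j ≤ t := by omega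
      have hcast : ((t-j:ℕ):ℝ) = (t:ℝ) - (j:ℝ) := by
        push_cast [Nat.cast_sub hjt]
        ring
      have hhalf : (t:ℝ)/2 ≤ ((t-j:ℕ):ℝ) := by
        rw [hcast]
        have h2j : (2*j:ℕ) ≤ t := by omega
        have : 2*(j:ℝ) ≤ (t:ℝ) := by exact_mod_cast h2j
        linarith
      have hub : ((t-j:ℕ):ℝ) ≤ (t:ℝ) := by
        have : t - j ≤ t := by omega
        exact_mod_cast this
      have hv0 := H 0 (Nat.zero_le _) (t-j) h1
      rw [Function.iterate_zero_apply] at hv0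
      have hexp0 : γ - ((0:ℕ):ℝ) + ε = γ + ε := by norm_num
      rw [hexp0] at hv0
      have hv1 : |v (t-j)| ≤ Q := by
        rw [hQ, mul_assoc]
        exact hv0.trans (mul_le_mul_of_nonneg_left
          (half_rpow (γ+ε) _ _ ht0 hhalf hub) hCv)
      rw [abs_mul]
      have hd := hCdb j
      calc |deltaCoef (-ξ) j| * |v (t-j)| ≤ (Cd * ((j:ℝ)+1)^(-ξ-1)) * Q :=
            mul_le_mul hd hv1 (abs_nonneg _) (by positivity)
        _ = ((j:ℝ)+1)^(-ξ-1) * (Cd * Q) := by ring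
    have key : ∑ j ∈ Finset.range (J+1), ((j:ℝ)+1)^(-ξ-1)
        ≤ Cs * (((J:ℝ)+1)^(-ξ) * (t:ℝ)^ε) := by
      have hS := hCsb (J+1) (by omega)
      have hmax : max (-ξ-1+1) 0 + ε = -ξ + ε := by
        rw [show -ξ-1+1 = -ξ by ring, max_eq_left (by linarith : (0:ℝ) ≤ -ξ)]
      rw [hmax] at hS
      have hc : (((J+1:ℕ)):ℝ) = (J:ℝ)+1 := by push_cast; ring
      rw [hc] at hS
      have hsplit : ((J:ℝ)+1)^(-ξ+ε) = ((J:ℝ)+1)^(-ξ) * ((J:ℝ)+1)^ε := by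
        rw [← Real.rpow_add (by positivity)]
      have hJt : ((J:ℝ)+1) ≤ (t:ℝ) := by
        have : J+1 ≤ t := by omega
        exact_mod_cast this
      have hmono : ((J:ℝ)+1)^ε ≤ (t:ℝ)^ε := Real.rpow_le_rpow (by positivity) hJt hε.le
      have h3 : ((J:ℝ)+1)^(-ξ) * ((J:ℝ)+1)^ε ≤ ((J:ℝ)+1)^(-ξ) * (t:ℝ)^ε :=
        mul_le_mul_of_nonneg_left hmono (Real.rpow_nonneg (by positivity) _)
      calc ∑ j ∈ Finset.range (J+1), ((j:ℝ)+1)^(-ξ-1)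
          ≤ Cs * ((J:ℝ)+1)^(-ξ+ε) := hS
        _ = Cs * (((J:ℝ)+1)^(-ξ) * ((J:ℝ)+1)^ε) := by rw [hsplit]
        _ ≤ Cs * (((J:ℝ)+1)^(-ξ) * (t:ℝ)^ε) := mul_le_mul_of_nonneg_left h3 hCs.le
    have hge : γ + (((0:ℕ):ℝ)+2)*ε = (γ+ε) + ε := by push_cast; ring
    have hrw : (t:ℝ) ^ (γ + (((0:ℕ):ℝ)+2)*ε) = (t:ℝ)^(γ+ε) * (t:ℝ)^ε := by
      rw [hge, Real.rpow_add ht0]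
    calc |∑ j ∈ Finset.range (J+1), deltaCoef (-ξ) j * v (t-j)|
        ≤ ∑ j ∈ Finset.range (J+1), |deltaCoef (-ξ) j * v (t-j)| :=
          Finset.abs_sum_le_sum_abs _ _
      _ ≤ ∑ j ∈ Finset.range (J+1), ((j:ℝ)+1)^(-ξ-1) * (Cd * Q) :=
          Finset.sum_le_sum hterm
      _ = (∑ j ∈ Finset.range (J+1), ((j:ℝ)+1)^(-ξ-1)) * (Cd * Q) := by
          rw [← Finset.sum_mul]
      _ ≤ (Cs * (((J:ℝ)+1)^(-ξ) * (t:ℝ)^ε)) * (Cd * Q) :=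
          mul_le_mul_of_nonneg_right key (by positivity)
      _ = Cd * Cs * (Cv * 2^|γ+ε|) * ((t:ℝ)^(γ+ε) * (t:ℝ)^ε) * ((J:ℝ)+1)^(-ξ) := by
          rw [hQ]; ring
      _ = Cd * Cs * (Cv * 2^|γ+ε|) * (t:ℝ) ^ (γ + (((0:ℕ):ℝ)+2)*ε) * ((J:ℝ)+1)^(-ξ) := by
          rw [hrw]
  | succ m ih =>
    intro ξ γ hξ v Cv hCv H
    rcases le_or_gt ξ (m:ℝ) with hc | hc
    · obtain ⟨C, hC, hb⟩ := ih ξ γ hc v Cv hCv (fun i hi k hk => H i (by omega) k hk)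
      refine ⟨C, hC, fun t J ht hJ => ?_⟩
      have ht1 : (1:ℝ) ≤ t := by exact_mod_cast ht
      have hmono : (t:ℝ) ^ (γ + ((m:ℝ)+2)*ε) ≤ (t:ℝ) ^ (γ + (((m+1:ℕ):ℝ)+2)*ε) := by
        apply Real.rpow_le_rpow_of_exponent_le ht1
        have h9 : ((m:ℝ)+2)*ε ≤ (((m+1:ℕ):ℝ)+2)*ε := by
          apply mul_le_mul_of_nonneg_right _ hε.le
          push_cast
          linarith
        linarith
      have h2 : (0:ℝ) ≤ ((J:ℝ)+1)^(-ξ) := Real.rpow_nonneg (by positivity) _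
      have h3 : C * (t:ℝ) ^ (γ + ((m:ℝ)+2)*ε) * ((J:ℝ)+1)^(-ξ)
          ≤ C * (t:ℝ) ^ (γ + (((m+1:ℕ):ℝ)+2)*ε) * ((J:ℝ)+1)^(-ξ) :=
        mul_le_mul_of_nonneg_right (mul_le_mul_of_nonneg_left hmono hC) h2
      exact (hb t J ht hJ).trans h3
    · -- m < ξ ≤ m+1 : Abel summation step
      have hξ0 : (0:ℝ) < ξ := lt_of_le_of_lt (Nat.cast_nonneg m) hc
      obtain ⟨Cd, hCd, hCdb⟩ := deltaBound (-ξ+1)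
      have hH' : ∀ i : ℕ, i ≤ m → ∀ k : ℕ, 1 ≤ k →
          |Dop^[i] (Dop v) k| ≤ Cv * (k:ℝ) ^ ((γ-1) - i + ε) := by
        intro i hi k hk
        have h1 : Dop^[i] (Dop v) k = Dop^[i+1] v k := by
          rw [Function.iterate_succ_apply]
        rw [h1]
        have h2 := H (i+1) (by omega) k hk
        have h3 : γ - ((i+1:ℕ):ℝ) + ε = (γ-1) - (i:ℝ) + ε := by push_cast; ring
        rw [h3] at h2
        exact h2
      obtain ⟨C0, hC0, hP0⟩ := ih (ξ-1) (γ-1)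
        (by push_cast at hξ ⊢; linarith) (Dop v) Cv hCv hH'
      set A := γ-1+((m:ℝ)+2)*ε with hAdef
      set CA := C0 * 2^|A| * 2^|ξ| with hCAdef
      set CB := Cd * (Cv * 2^|γ+ε|) with hCBdef
      set CC := Cv * 2^|γ+ε| with hCCdef
      have hCA : 0 ≤ CA := by rw [hCAdef]; positivity
      have hCB : 0 ≤ CB := by rw [hCBdef]; positivity
      have hCC : 0 ≤ CC := by rw [hCCdef]; positivity
      refine ⟨CA + CB + CC, by linarith, fun t J ht hJ => ?_⟩
      have ht0 : (0:ℝ) < t := by exact_mod_cast ht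
      have ht1 : (1:ℝ) ≤ t := by exact_mod_cast ht
      have hJ10 : (0:ℝ) ≤ ((J:ℝ)+1)^(-ξ) := Real.rpow_nonneg (by positivity) _
      have htg : (0:ℝ) ≤ (t:ℝ)^(γ + (((m+1:ℕ):ℝ)+2)*ε) := Real.rpow_nonneg ht0.le _
      have hexpm : (t:ℝ) ^ (γ+ε) ≤ (t:ℝ) ^ (γ + (((m+1:ℕ):ℝ)+2)*ε) := by
        apply Real.rpow_le_rpow_of_exponent_le ht1
        have h9 : (1:ℝ) ≤ ((m+1:ℕ):ℝ)+2 := by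
          push_cast
          linarith [Nat.cast_nonneg (α := ℝ) m]
        have h10 := mul_le_mul_of_nonneg_right h9 hε.le
        rw [one_mul] at h10
        linarith
      have hvb : ∀ j : ℕ, j ≤ J → |v (t-j)| ≤ CC * (t:ℝ)^(γ+ε) := by
        intro j hjJ
        have h1 : 1 ≤ t - j := by omega
        have hjt : j ≤ t := by omega
        have hcast : ((t-j:ℕ):ℝ) = (t:ℝ) - (j:ℝ) := by
          push_cast [Nat.cast_sub hjt]
          ring
        have hhalf : (t:ℝ)/2 ≤ ((t-j:ℕ):ℝ) := by
          rw [hcast]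
          have h2j : (2*j:ℕ) ≤ t := by omega
          have : 2*(j:ℝ) ≤ (t:ℝ) := by exact_mod_cast h2j
          linarith
        have hub : ((t-j:ℕ):ℝ) ≤ (t:ℝ) := by
          have : t - j ≤ t := by omega
          exact_mod_cast this
        have hv0 := H 0 (Nat.zero_le _) (t-j) h1
        rw [Function.iterate_zero_apply] at hv0
        have hexp0 : γ - ((0:ℕ):ℝ) + ε = γ + ε := by norm_num
        rw [hexp0] at hv0
        rw [hCCdef, mul_assoc]
        exact hv0.trans (mul_le_mul_of_nonneg_left
          (half_rpow (γ+ε) _ _ ht0 hhalf hub) hCv)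
      rcases Nat.eq_zero_or_pos J with hJ0 | hJ1
      · -- J = 0
        subst hJ0
        have hsum : ∑ j ∈ Finset.range (0+1), deltaCoef (-ξ) j * v (t-j) = v t := by
          rw [Finset.sum_range_one]
          simp [deltaCoef]
        rw [hsum]
        have h1 := hvb 0 le_rfl
        rw [Nat.sub_zero] at h1
        have h2 : ((0:ℕ):ℝ)+1 = 1 := by norm_num
        rw [h2, Real.one_rpow, mul_one]
        calc |v t| ≤ CC * (t:ℝ)^(γ+ε) := h1
          _ ≤ CC * (t:ℝ)^(γ + (((m+1:ℕ):ℝ)+2)*ε) := mul_le_mul_of_nonneg_left hexpm hCC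
          _ ≤ (CA + CB + CC) * (t:ℝ)^(γ + (((m+1:ℕ):ℝ)+2)*ε) := by
              apply mul_le_mul_of_nonneg_right _ htg
              linarith
      · -- J ≥ 1, t ≥ 2
        have ht2 : 2 ≤ t := by omega
        have ht2c : (2:ℝ) ≤ (t:ℝ) := by exact_mod_cast ht2
        have hJpos : (0:ℝ) < (J:ℝ) := by exact_mod_cast hJ1
        have habel := abelsum (-ξ) v J t (by omega)
        rw [habel]
        have hmain : |∑ j ∈ Finset.range J, deltaCoef ((-ξ)+1) j * (Dop v) ((t-1)-j)|
            ≤ CA * (t:ℝ)^(γ + (((m+1:ℕ):ℝ)+2)*ε) * ((J:ℝ)+1)^(-ξ) := by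
          have hP1 := hP0 (t-1) (J-1) (by omega) (by omega)
          have hJr : J - 1 + 1 = J := by omega
          rw [hJr] at hP1
          simp only [show -(ξ-1) = (-ξ)+1 from by ring] at hP1
          have hc1 : ((t-1:ℕ):ℝ) = (t:ℝ)-1 := by
            push_cast [Nat.cast_sub (by omega : 1 ≤ t)]
            ring
          have hc2 : ((J-1:ℕ):ℝ)+1 = (J:ℝ) := by
            push_cast [Nat.cast_sub (by omega : 1 ≤ J)]
            ring
          rw [hc1, hc2] at hP1
          have hA1 : ((t:ℝ)-1)^A ≤ 2^|A| * (t:ℝ)^A :=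
            half_rpow A _ _ ht0 (by linarith) (by linarith)
          have hsplitJ : (J:ℝ)^((-ξ)+1) = (J:ℝ)^(-ξ) * (J:ℝ) := by
            rw [Real.rpow_add hJpos, Real.rpow_one]
          have hJb : (J:ℝ)^(-ξ) ≤ 2^|ξ| * ((J:ℝ)+1)^(-ξ) := by
            have := half_rpow (-ξ) (J:ℝ) ((J:ℝ)+1) (by positivity)
              (by linarith [hJpos]) (by linarith)
            rwa [abs_neg] at this
          have hJt : (J:ℝ) ≤ (t:ℝ) := by
            have : J ≤ t := by omega
            exact_mod_cast this
          have hstep1 : C0 * ((t:ℝ)-1)^A * (J:ℝ)^((-ξ)+1)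
              ≤ (C0 * (2^|A| * (t:ℝ)^A)) * (((2^|ξ| * ((J:ℝ)+1)^(-ξ))) * (t:ℝ)) := by
            rw [hsplitJ]
            apply mul_le_mul
            · exact mul_le_mul_of_nonneg_left hA1 hC0
            · apply mul_le_mul hJb hJt hJpos.le (by positivity)
            · positivity
            · positivity
          have hstep2 : (C0 * (2^|A| * (t:ℝ)^A)) * (((2^|ξ| * ((J:ℝ)+1)^(-ξ))) * (t:ℝ))
              = CA * ((t:ℝ)^A * (t:ℝ)) * ((J:ℝ)+1)^(-ξ) := by
            rw [hCAdef]
            ring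
          have hstep3 : (t:ℝ)^A * (t:ℝ) = (t:ℝ)^(γ + ((m:ℝ)+2)*ε) := by
            rw [← Real.rpow_add_one ht0.ne' A]
            congr 1
            rw [hAdef]
            ring
          have hstep4 : (t:ℝ)^(γ + ((m:ℝ)+2)*ε) ≤ (t:ℝ)^(γ + (((m+1:ℕ):ℝ)+2)*ε) := by
            apply Real.rpow_le_rpow_of_exponent_le ht1
            have h9 : ((m:ℝ)+2)*ε ≤ (((m+1:ℕ):ℝ)+2)*ε := by
              apply mul_le_mul_of_nonneg_right _ hε.le
              push_cast
              linarith
            linarith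
          calc |∑ j ∈ Finset.range J, deltaCoef ((-ξ)+1) j * (Dop v) ((t-1)-j)|
              ≤ C0 * ((t:ℝ)-1)^A * (J:ℝ)^((-ξ)+1) := hP1
            _ ≤ CA * ((t:ℝ)^A * (t:ℝ)) * ((J:ℝ)+1)^(-ξ) := by
                rw [← hstep2]
                exact hstep1
            _ = CA * (t:ℝ)^(γ + ((m:ℝ)+2)*ε) * ((J:ℝ)+1)^(-ξ) := by rw [hstep3]
            _ ≤ CA * (t:ℝ)^(γ + (((m+1:ℕ):ℝ)+2)*ε) * ((J:ℝ)+1)^(-ξ) := by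
                apply mul_le_mul_of_nonneg_right _ hJ10
                exact mul_le_mul_of_nonneg_left hstep4 hCA
        have hbnd : |deltaCoef ((-ξ)+1) J * v (t-J)|
            ≤ CB * (t:ℝ)^(γ + (((m+1:ℕ):ℝ)+2)*ε) * ((J:ℝ)+1)^(-ξ) := by
          have hd := hCdb J
          rw [show -ξ+1-1 = -ξ from by ring] at hd
          have hv1 := hvb J le_rfl
          rw [abs_mul]
          calc |deltaCoef (-ξ+1) J| * |v (t-J)|
              ≤ (Cd * ((J:ℝ)+1)^(-ξ)) * (CC * (t:ℝ)^(γ+ε)) :=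
                mul_le_mul hd hv1 (abs_nonneg _) (by positivity)
            _ = (Cd * CC) * (t:ℝ)^(γ+ε) * ((J:ℝ)+1)^(-ξ) := by ring
            _ ≤ (Cd * CC) * (t:ℝ)^(γ + (((m+1:ℕ):ℝ)+2)*ε) * ((J:ℝ)+1)^(-ξ) := by
                apply mul_le_mul_of_nonneg_right _ hJ10
                apply mul_le_mul_of_nonneg_left hexpm (by positivity)
            _ = CB * (t:ℝ)^(γ + (((m+1:ℕ):ℝ)+2)*ε) * ((J:ℝ)+1)^(-ξ) := by
                rw [hCBdef, hCCdef]
        calc |∑ j ∈ Finset.range J, deltaCoef ((-ξ)+1) j * (Dop v) ((t-1)-j)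
              + deltaCoef ((-ξ)+1) J * v (t-J)|
            ≤ |∑ j ∈ Finset.range J, deltaCoef ((-ξ)+1) j * (Dop v) ((t-1)-j)|
              + |deltaCoef ((-ξ)+1) J * v (t-J)| := abs_add_le _ _
          _ ≤ CA * (t:ℝ)^(γ + (((m+1:ℕ):ℝ)+2)*ε) * ((J:ℝ)+1)^(-ξ)
              + CB * (t:ℝ)^(γ + (((m+1:ℕ):ℝ)+2)*ε) * ((J:ℝ)+1)^(-ξ) := add_le_add hmain hbnd
          _ ≤ (CA + CB + CC) * (t:ℝ)^(γ + (((m+1:ℕ):ℝ)+2)*ε) * ((J:ℝ)+1)^(-ξ) := by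
              nlinarith [mul_nonneg (mul_nonneg hCC htg) hJ10]

open Filter in
theorem stmt3 (γ ξ r : ℝ) (hr : 0 ≤ r) (hξ : -(1/2) < ξ) (δ : ℝ) (hδ : 0 < δ) :
    (fun t : ℕ => ∑ j ∈ Finset.range t,
        deltaCoef (-ξ) j * Real.log ((t : ℝ) - j) ^ r * ((t : ℝ) - j) ^ γ)
      =O[atTop]
    (fun t : ℕ => (t : ℝ) ^ (max γ (-1) - ξ + δ)) := by
  obtain ⟨m, hξm⟩ : ∃ m : ℕ, ξ ≤ (m:ℝ) :=
    ⟨⌈max ξ 0⌉₊, (le_max_left ξ 0).trans (Nat.le_ceil _)⟩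
  obtain ⟨ε, hε, hεδ1, hεδ2⟩ : ∃ ε : ℝ, 0 < ε ∧ ((m:ℝ)+2)*ε ≤ δ ∧ 2*ε ≤ δ := by
    have h1 : (0:ℝ) < (m:ℝ)+3 := by positivity
    have hm0 : (0:ℝ) ≤ (m:ℝ) := Nat.cast_nonneg m
    refine ⟨δ/((m:ℝ)+3), by positivity, ?_, ?_⟩
    · rw [mul_div_assoc', div_le_iff₀ h1]
      nlinarith
    · rw [mul_div_assoc', div_le_iff₀ h1]
      nlinarith
  obtain ⟨Cw, hCw, hWb⟩ := wBound γ r ε hε m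
  obtain ⟨Cp, hCp, hPb⟩ := Pmain ε hε m ξ γ hξm
    (fun k : ℕ => Real.log k ^ r * (k:ℝ) ^ γ) Cw hCw hWb
  obtain ⟨Cd, hCd, hCdb⟩ := deltaBound (-ξ)
  obtain ⟨Cs, hCs, hCsb⟩ := sumBound (γ+ε) ε hε
  apply Asymptotics.IsBigO.of_bound (Cp * 2^|ξ| + Cd * 2^|(-ξ-1)| * Cw * Cs)
  filter_upwards [Filter.eventually_ge_atTop 1] with t ht
  have ht0 : (0:ℝ) < t := by exact_mod_cast ht
  have ht1 : (1:ℝ) ≤ t := by exact_mod_cast ht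
  set X := (t:ℝ) ^ (max γ (-1) - ξ + δ) with hXdef
  have hX0 : 0 ≤ X := Real.rpow_nonneg ht0.le _
  set J := t/2 with hJdef
  have h2J : 2*J ≤ t := by omega
  have hJ1t : J+1 ≤ t := by omega
  rw [Real.norm_eq_abs, Real.norm_eq_abs, abs_of_nonneg hX0]
  have hsummand : ∀ j ∈ Finset.range t,
      deltaCoef (-ξ) j * Real.log ((t:ℝ) - j) ^ r * ((t:ℝ) - j) ^ γ
      = deltaCoef (-ξ) j * (Real.log (((t-j:ℕ)):ℝ) ^ r * (((t-j:ℕ)):ℝ) ^ γ) := by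
    intro j hj
    have hjt : j ≤ t := le_of_lt (Finset.mem_range.mp hj)
    have hc : (((t-j:ℕ)):ℝ) = (t:ℝ)-(j:ℝ) := by
      push_cast [Nat.cast_sub hjt]
      ring
    rw [hc]
    ring
  rw [Finset.sum_congr rfl hsummand]
  have hsplit : ∑ j ∈ Finset.range t,
      deltaCoef (-ξ) j * (Real.log (((t-j:ℕ)):ℝ) ^ r * (((t-j:ℕ)):ℝ) ^ γ)
      = (∑ j ∈ Finset.range (J+1),
          deltaCoef (-ξ) j * (Real.log (((t-j:ℕ)):ℝ) ^ r * (((t-j:ℕ)):ℝ) ^ γ))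
        + (∑ j ∈ Finset.Ico (J+1) t,
          deltaCoef (-ξ) j * (Real.log (((t-j:ℕ)):ℝ) ^ r * (((t-j:ℕ)):ℝ) ^ γ)) := by
    rw [Finset.range_eq_Ico,
      ← Finset.sum_Ico_consecutive _ (Nat.zero_le (J+1)) hJ1t,
      ← Finset.range_eq_Ico]
  rw [hsplit]
  -- far part
  have hfar : |∑ j ∈ Finset.range (J+1),
      deltaCoef (-ξ) j * (Real.log (((t-j:ℕ)):ℝ) ^ r * (((t-j:ℕ)):ℝ) ^ γ)|
      ≤ Cp * 2^|ξ| * X := by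
    have h1 : |∑ j ∈ Finset.range (J+1),
        deltaCoef (-ξ) j * (Real.log (((t-j:ℕ)):ℝ) ^ r * (((t-j:ℕ)):ℝ) ^ γ)|
        ≤ Cp * (t:ℝ) ^ (γ + ((m:ℝ)+2)*ε) * ((J:ℝ)+1) ^ (-ξ) := hPb t J ht h2J
    have hhalfJ : (t:ℝ)/2 ≤ (J:ℝ)+1 := by
      have h2 : t ≤ 2*(J+1) := by omega
      have h3 : (t:ℝ) ≤ 2*((J:ℝ)+1) := by exact_mod_cast h2
      linarith
    have hJt : (J:ℝ)+1 ≤ (t:ℝ) := by exact_mod_cast hJ1t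
    have h2 : ((J:ℝ)+1)^(-ξ) ≤ 2^|ξ| * (t:ℝ)^(-ξ) := by
      have := half_rpow (-ξ) ((J:ℝ)+1) t ht0 hhalfJ hJt
      rwa [abs_neg] at this
    have h4 : (t:ℝ) ^ (γ + ((m:ℝ)+2)*ε) * (t:ℝ)^(-ξ)
        = (t:ℝ) ^ (γ + ((m:ℝ)+2)*ε + -ξ) := (Real.rpow_add ht0 _ _).symm
    have h5 : (t:ℝ) ^ (γ + ((m:ℝ)+2)*ε + -ξ) ≤ X := by
      rw [hXdef]
      apply Real.rpow_le_rpow_of_exponent_le ht1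
      have := le_max_left γ (-1:ℝ)
      linarith
    calc |∑ j ∈ Finset.range (J+1),
        deltaCoef (-ξ) j * (Real.log (((t-j:ℕ)):ℝ) ^ r * (((t-j:ℕ)):ℝ) ^ γ)|
        ≤ Cp * (t:ℝ) ^ (γ + ((m:ℝ)+2)*ε) * ((J:ℝ)+1) ^ (-ξ) := h1
      _ ≤ Cp * (t:ℝ) ^ (γ + ((m:ℝ)+2)*ε) * (2^|ξ| * (t:ℝ)^(-ξ)) := by
          apply mul_le_mul_of_nonneg_left h2 (by positivity)
      _ = (Cp * 2^|ξ|) * ((t:ℝ) ^ (γ + ((m:ℝ)+2)*ε) * (t:ℝ)^(-ξ)) := by ring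
      _ = (Cp * 2^|ξ|) * (t:ℝ) ^ (γ + ((m:ℝ)+2)*ε + -ξ) := by rw [h4]
      _ ≤ Cp * 2^|ξ| * X := mul_le_mul_of_nonneg_left h5 (by positivity)
  -- near part
  have hnear : ∑ j ∈ Finset.Ico (J+1) t,
      |deltaCoef (-ξ) j * (Real.log (((t-j:ℕ)):ℝ) ^ r * (((t-j:ℕ)):ℝ) ^ γ)|
      ≤ Cd * 2^|(-ξ-1)| * Cw * Cs * X := by
    set K1 := Cd * (2^|(-ξ-1)| * (t:ℝ)^(-ξ-1)) with hK1def
    have hK10 : 0 ≤ K1 := by rw [hK1def]; positivity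
    have hterm : ∀ j ∈ Finset.Ico (J+1) t,
        |deltaCoef (-ξ) j * (Real.log (((t-j:ℕ)):ℝ) ^ r * (((t-j:ℕ)):ℝ) ^ γ)|
        ≤ K1 * (Cw * (((t-j:ℕ)):ℝ) ^ (γ+ε)) := by
      intro j hj
      obtain ⟨hj1, hj2⟩ := Finset.mem_Ico.mp hj
      have hd := hCdb j
      have hhalfj : (t:ℝ)/2 ≤ (j:ℝ)+1 := by
        have h2 : t ≤ 2*(j+1) := by omega
        have h3 : (t:ℝ) ≤ 2*((j:ℝ)+1) := by exact_mod_cast h2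
        linarith
      have hjt : (j:ℝ)+1 ≤ (t:ℝ) := by
        have : j+1 ≤ t := by omega
        exact_mod_cast this
      have hd2 : |deltaCoef (-ξ) j| ≤ K1 := by
        rw [hK1def]
        refine hd.trans (mul_le_mul_of_nonneg_left ?_ hCd)
        have := half_rpow (-ξ-1) ((j:ℝ)+1) t ht0 hhalfj hjt
        exact this
      have hwv := hWb 0 (Nat.zero_le m) (t-j) (by omega)
      rw [Function.iterate_zero_apply] at hwv
      have hexp0 : γ - ((0:ℕ):ℝ) + ε = γ + ε := by norm_num
      rw [hexp0] at hwv
      rw [abs_mul]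
      exact mul_le_mul hd2 hwv (abs_nonneg _) hK10
    have hsum1 : ∑ j ∈ Finset.Ico (J+1) t,
        |deltaCoef (-ξ) j * (Real.log (((t-j:ℕ)):ℝ) ^ r * (((t-j:ℕ)):ℝ) ^ γ)|
        ≤ ∑ j ∈ Finset.Ico (J+1) t, K1 * (Cw * (((t-j:ℕ)):ℝ) ^ (γ+ε)) :=
      Finset.sum_le_sum hterm
    have hreidx : ∑ j ∈ Finset.Ico (J+1) t, (((t-j:ℕ)):ℝ) ^ (γ+ε)
        = ∑ k ∈ Finset.Ico 1 (t-J), ((k:ℕ):ℝ) ^ (γ+ε) := by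
      apply Finset.sum_nbij' (fun j => t - j) (fun k => t - k)
      · intro a ha
        obtain ⟨h1, h2⟩ := Finset.mem_Ico.mp ha
        rw [Finset.mem_Ico]
        omega
      · intro a ha
        obtain ⟨h1, h2⟩ := Finset.mem_Ico.mp ha
        rw [Finset.mem_Ico]
        omega
      · intro a ha
        obtain ⟨h1, h2⟩ := Finset.mem_Ico.mp ha
        omega
      · intro a ha
        obtain ⟨h1, h2⟩ := Finset.mem_Ico.mp ha
        omega
      · intro a ha
        rfl
    have hmono2 : ∑ k ∈ Finset.Ico 1 (t-J), ((k:ℕ):ℝ) ^ (γ+ε)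
        ≤ ∑ k ∈ Finset.Ico 1 (t+1), ((k:ℕ):ℝ) ^ (γ+ε) := by
      apply Finset.sum_le_sum_of_subset_of_nonneg
      · exact Finset.Ico_subset_Ico le_rfl (by omega)
      · intro k _ _
        positivity
    have hico : ∑ k ∈ Finset.Ico 1 (t+1), ((k:ℕ):ℝ) ^ (γ+ε)
        = ∑ j ∈ Finset.range t, ((j:ℝ)+1) ^ (γ+ε) := by
      rw [Finset.sum_Ico_eq_sum_range]
      have h6 : t + 1 - 1 = t := by omega
      rw [h6]
      apply Finset.sum_congr rfl
      intro j _
      congr 1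
      push_cast
      ring
    have hsb := hCsb t ht
    have hkey : ∑ j ∈ Finset.Ico (J+1) t, (((t-j:ℕ)):ℝ) ^ (γ+ε)
        ≤ Cs * (t:ℝ) ^ (max (γ+ε+1) 0 + ε) := by
      rw [hreidx]
      exact (hmono2.trans_eq hico).trans hsb
    have hexpineq : (t:ℝ)^(-ξ-1) * (t:ℝ) ^ (max (γ+ε+1) 0 + ε) ≤ X := by
      rw [← Real.rpow_add ht0, hXdef]
      apply Real.rpow_le_rpow_of_exponent_le ht1
      have hmx : max (γ+ε+1) 0 ≤ max (γ+1) 0 + ε := by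
        apply max_le
        · have := le_max_left (γ+1) (0:ℝ)
          linarith
        · have := le_max_right (γ+1) (0:ℝ)
          linarith
      have hmx2 : max (γ+1) (0:ℝ) - 1 = max γ (-1) := by
        rcases le_total (γ+1) (0:ℝ) with h | h
        · rw [max_eq_right h, max_eq_right (by linarith : γ ≤ (-1:ℝ))]
          norm_num
        · rw [max_eq_left h, max_eq_left (by linarith : (-1:ℝ) ≤ γ)]
          ring
      linarith
    calc ∑ j ∈ Finset.Ico (J+1) t,
        |deltaCoef (-ξ) j * (Real.log (((t-j:ℕ)):ℝ) ^ r * (((t-j:ℕ)):ℝ) ^ γ)|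
        ≤ ∑ j ∈ Finset.Ico (J+1) t, K1 * (Cw * (((t-j:ℕ)):ℝ) ^ (γ+ε)) := hsum1
      _ = K1 * Cw * (∑ j ∈ Finset.Ico (J+1) t, (((t-j:ℕ)):ℝ) ^ (γ+ε)) := by
          rw [Finset.mul_sum]
          apply Finset.sum_congr rfl
          intro j _
          ring
      _ ≤ K1 * Cw * (Cs * (t:ℝ) ^ (max (γ+ε+1) 0 + ε)) := by
          apply mul_le_mul_of_nonneg_left hkey (by positivity)
      _ = (Cd * 2^|(-ξ-1)| * Cw * Cs) * ((t:ℝ)^(-ξ-1) * (t:ℝ) ^ (max (γ+ε+1) 0 + ε)) := by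
          rw [hK1def]
          ring
      _ ≤ Cd * 2^|(-ξ-1)| * Cw * Cs * X := by
          apply mul_le_mul_of_nonneg_left hexpineq (by positivity)
  calc |(∑ j ∈ Finset.range (J+1),
        deltaCoef (-ξ) j * (Real.log (((t-j:ℕ)):ℝ) ^ r * (((t-j:ℕ)):ℝ) ^ γ))
      + (∑ j ∈ Finset.Ico (J+1) t,
        deltaCoef (-ξ) j * (Real.log (((t-j:ℕ)):ℝ) ^ r * (((t-j:ℕ)):ℝ) ^ γ))|
      ≤ |∑ j ∈ Finset.range (J+1),
        deltaCoef (-ξ) j * (Real.log (((t-j:ℕ)):ℝ) ^ r * (((t-j:ℕ)):ℝ) ^ γ)|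
      + |∑ j ∈ Finset.Ico (J+1) t,
        deltaCoef (-ξ) j * (Real.log (((t-j:ℕ)):ℝ) ^ r * (((t-j:ℕ)):ℝ) ^ γ)| := abs_add_le _ _
    _ ≤ |∑ j ∈ Finset.range (J+1),
        deltaCoef (-ξ) j * (Real.log (((t-j:ℕ)):ℝ) ^ r * (((t-j:ℕ)):ℝ) ^ γ)|
      + ∑ j ∈ Finset.Ico (J+1) t,
        |deltaCoef (-ξ) j * (Real.log (((t-j:ℕ)):ℝ) ^ r * (((t-j:ℕ)):ℝ) ^ γ)| := by
        have := Finset.abs_sum_le_sum_abs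
          (fun j => deltaCoef (-ξ) j * (Real.log (((t-j:ℕ)):ℝ) ^ r * (((t-j:ℕ)):ℝ) ^ γ))
          (Finset.Ico (J+1) t)
        linarith
    _ ≤ Cp * 2^|ξ| * X + Cd * 2^|(-ξ-1)| * Cw * Cs * X := add_le_add hfar hnear
    _ = (Cp * 2^|ξ| + Cd * 2^|(-ξ-1)| * Cw * Cs) * X := by ring
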